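/- Let E and F be independent exponentially distributed random variables with rate 1. Then the law of the product E·F is absolutely continuous with respect to Lebesgue measure on (0, ∞), with density t ↦ 2 K₀(2√t). -/

import Mathlib

open MeasureTheory ProbabilityTheory Real

/-- Modified Bessel function of the second kind and order zero:
`K₀(z) = ∫₀^∞ e^{-z cosh t} dt`. -/
noncomputable def besselK0 (z : ℝ) : ℝ :=
  ∫ t in Set.Ioi (0 : ℝ), Real.exp (-z * Real.cosh t)

open Set
open scoped ENNReal

lemma my_lintegral_image {s : Set ℝ} {f f' : ℝ → ℝ}
    (hs : MeasurableSet s) (hf' : ∀ x ∈ s, HasDerivWithinAt f (f' x) s x)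
    (hf : Set.InjOn f s) (g : ℝ → ℝ≥0∞) :
    ∫⁻ x in f '' s, g x = ∫⁻ x in s, ENNReal.ofReal |f' x| * g (f x) := by
  simpa only [ContinuousLinearMap.det_toSpanSingleton] using
    MeasureTheory.lintegral_image_eq_lintegral_abs_det_fderiv_mul volume hs
      (fun x hx => (hf' x hx).hasFDerivWithinAt) hf g

lemma besselK0_integrable {z : ℝ} (hz : 0 < z) :
    IntegrableOn (fun u => Real.exp (-z * Real.cosh u)) (Set.Ioi 0) := by
  have hb : IntegrableOn (fun u => Real.exp (-z * u)) (Set.Ioi 0) := by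
    simpa [neg_mul, mul_comm] using exp_neg_integrableOn_Ioi 0 hz
  refine Integrable.mono hb ?_ ?_
  · exact (Real.continuous_exp.comp (by continuity)).aestronglyMeasurable
  · filter_upwards [ae_restrict_mem measurableSet_Ioi] with u hu
    simp only [Real.norm_eq_abs, abs_of_pos (Real.exp_pos _)]
    apply Real.exp_le_exp.2
    have h1 : u ≤ Real.sinh u := (Real.self_le_sinh_iff.2 (le_of_lt hu))
    nlinarith [Real.sinh_lt_cosh u, hz]

lemma besselK0_lintegral {z : ℝ} (hz : 0 < z) :
    ∫⁻ u in Set.Ioi (0:ℝ), ENNReal.ofReal (Real.exp (-z * Real.cosh u))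
      = ENNReal.ofReal (besselK0 z) := by
  rw [besselK0, ← ofReal_integral_eq_lintegral_ofReal (besselK0_integrable hz)]
  filter_upwards with u using (Real.exp_pos _).le

lemma besselK0_nonneg {z : ℝ} (hz : 0 < z) : 0 ≤ besselK0 z := by
  apply integral_nonneg
  intro u; exact (Real.exp_pos _).le

lemma besselK0_lintegral_univ {z : ℝ} (hz : 0 < z) :
    ∫⁻ u, ENNReal.ofReal (Real.exp (-z * Real.cosh u))
      = ENNReal.ofReal (2 * besselK0 z) := by
  have hsplit := lintegral_add_compl (fun u => ENNReal.ofReal (Real.exp (-z * Real.cosh u)))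
    (measurableSet_Ici (a := (0:ℝ))) (μ := volume)
  rw [← hsplit]
  have hIci : ∫⁻ u in Set.Ici (0:ℝ), ENNReal.ofReal (Real.exp (-z * Real.cosh u))
      = ENNReal.ofReal (besselK0 z) := by
    rw [← besselK0_lintegral hz]
    exact (setLIntegral_congr (μ := volume) (f := fun u => ENNReal.ofReal (Real.exp (-z * Real.cosh u))) (Ioi_ae_eq_Ici (a := (0:ℝ)))).symm
  have hneg : (Set.Ici (0:ℝ))ᶜ = Neg.neg '' Set.Ioi 0 := by
    rw [Set.image_neg_Ioi, Set.compl_Ici, neg_zero]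
  have hIio : ∫⁻ u in (Set.Ici (0:ℝ))ᶜ, ENNReal.ofReal (Real.exp (-z * Real.cosh u))
      = ENNReal.ofReal (besselK0 z) := by
    rw [hneg, my_lintegral_image measurableSet_Ioi
      (fun x _ => (hasDerivAt_neg x).hasDerivWithinAt) (fun a _ b _ h => by simpa using h)]
    simp only [Real.cosh_neg, abs_neg, abs_one, ENNReal.ofReal_one, one_mul]
    exact besselK0_lintegral hz
  rw [hIci, hIio, ← ENNReal.ofReal_add (besselK0_nonneg hz) (besselK0_nonneg hz)]
  ring_nf


lemma key_integral {t : ℝ} (ht : 0 < t) :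
    ∫⁻ x in Set.Ioi (0:ℝ),
        ENNReal.ofReal (x⁻¹ * Real.exp (-x) * Real.exp (-(t / x)))
      = ENNReal.ofReal (2 * besselK0 (2 * Real.sqrt t)) := by
  set c := Real.sqrt t with hc
  have hc0 : 0 < c := Real.sqrt_pos.2 ht
  have himg : (fun u => c * Real.exp u) '' Set.univ = Set.Ioi 0 := by
    ext x
    simp only [Set.image_univ, Set.mem_range, Set.mem_Ioi]
    constructor
    · rintro ⟨u, rfl⟩; positivity
    · intro hx
      exact ⟨Real.log (x / c), by rw [Real.exp_log (by positivity)]; field_simp⟩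
  have hderiv : ∀ u ∈ Set.univ, HasDerivWithinAt (fun u => c * Real.exp u)
      (c * Real.exp u) Set.univ u :=
    fun u _ => ((Real.hasDerivAt_exp u).const_mul c).hasDerivWithinAt
  have hinj : Set.InjOn (fun u => c * Real.exp u) Set.univ := by
    intro a _ b _ h
    exact Real.exp_injective (mul_left_cancel₀ (ne_of_gt hc0) h)
  rw [← himg, my_lintegral_image MeasurableSet.univ hderiv hinj, setLIntegral_univ]
  rw [← besselK0_lintegral_univ (by positivity : (0:ℝ) < 2 * c)]
  apply lintegral_congr
  intro u
  have he : (0:ℝ) < c * Real.exp u := by positivity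
  rw [abs_of_pos he, ← ENNReal.ofReal_mul he.le]
  congr 1
  have h1 : t / (c * Real.exp u) = c * Real.exp (-u) := by
    rw [Real.exp_neg, ← Real.mul_self_sqrt ht.le, ← hc]
    field_simp
  rw [h1]
  have h2 : c * Real.exp u * ((c * Real.exp u)⁻¹ * Real.exp (-(c * Real.exp u))
      * Real.exp (-(c * Real.exp (-u))))
      = Real.exp (-(c * Real.exp u) + -(c * Real.exp (-u))) := by
    rw [Real.exp_add]
    field_simp
  rw [h2]
  congr 1
  rw [Real.cosh_eq, Real.exp_neg]
  field_simp
  ring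

lemma inner_cov {x : ℝ} (hx : 0 < x) (g : ℝ → ℝ≥0∞) :
    ∫⁻ y in Set.Ioi (0:ℝ), ENNReal.ofReal (Real.exp (-y)) * g (x * y)
      = ∫⁻ t in Set.Ioi (0:ℝ), ENNReal.ofReal (x⁻¹ * Real.exp (-(t / x))) * g t := by
  have himg : (fun y => x * y) '' Set.Ioi 0 = Set.Ioi 0 := by
    ext u
    simp only [Set.mem_image, Set.mem_Ioi]
    constructor
    · rintro ⟨y, hy, rfl⟩; positivity
    · intro hu; exact ⟨u / x, by positivity, by field_simp⟩
  have hderiv : ∀ y ∈ Set.Ioi (0:ℝ), HasDerivWithinAt (fun y => x * y) x (Set.Ioi 0) y :=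
    fun y _ => by simpa using ((hasDerivAt_id y).const_mul x).hasDerivWithinAt (s := Set.Ioi 0)
  have hinj : Set.InjOn (fun y => x * y) (Set.Ioi 0) :=
    fun a _ b _ h => mul_left_cancel₀ (ne_of_gt hx) h
  have hcov := my_lintegral_image measurableSet_Ioi hderiv hinj
    (fun t => ENNReal.ofReal (x⁻¹ * Real.exp (-(t / x))) * g t)
  rw [himg] at hcov
  rw [hcov]
  apply setLIntegral_congr_fun measurableSet_Ioi
  intro y hy
  beta_reduce
  rw [abs_of_pos hx, ← mul_assoc, ← ENNReal.ofReal_mul hx.le]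
  congr 2
  rw [mul_div_cancel_left₀ _ (ne_of_gt hx)]
  field_simp

lemma lintegral_expMeasure (h : ℝ → ℝ≥0∞) (hh : Measurable h) :
    ∫⁻ y, h y ∂(expMeasure 1) = ∫⁻ y in Set.Ioi (0:ℝ), ENNReal.ofReal (Real.exp (-y)) * h y := by
  have hexp : expMeasure 1 = volume.withDensity (exponentialPDF 1) := rfl
  have hmeas : Measurable (exponentialPDF 1) :=
    (measurable_exponentialPDFReal 1).ennreal_ofReal
  rw [hexp, lintegral_withDensity_eq_lintegral_mul _ hmeas hh]
  have hpt : ∀ y : ℝ, exponentialPDF 1 y * h y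
      = (Set.Ici (0:ℝ)).indicator (fun y => ENNReal.ofReal (Real.exp (-y)) * h y) y := by
    intro y
    rw [Set.indicator_apply, exponentialPDF_eq]
    by_cases hy : (0:ℝ) ≤ y
    · simp [hy, Set.mem_Ici]
    · simp [hy, Set.mem_Ici]
  simp only [Pi.mul_apply]
  rw [lintegral_congr hpt, lintegral_indicator measurableSet_Ici]
  exact (setLIntegral_congr (μ := volume)
    (f := fun y => ENNReal.ofReal (Real.exp (-y)) * h y) (Ioi_ae_eq_Ici (a := (0:ℝ)))).symm

/-- The law of the product of two independent rate-one exponential random variables is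
absolutely continuous with respect to Lebesgue measure on `(0, ∞)`, with density
`t ↦ 2 K₀(2√t)`. -/
theorem product_exponential_density
    {Ω : Type*} [MeasurableSpace Ω] (P : Measure Ω) [IsProbabilityMeasure P]
    (E F : Ω → ℝ) (hE : Measurable E) (hF : Measurable F)
    (hlawE : P.map E = expMeasure 1) (hlawF : P.map F = expMeasure 1)
    (hindep : IndepFun E F P) :
    P.map (fun ω => E ω * F ω)
      = volume.withDensity
          (fun t => if 0 < t then ENNReal.ofReal (2 * besselK0 (2 * Real.sqrt t)) else 0) := by

  have hpm : IsProbabilityMeasure (expMeasure 1) := isProbabilityMeasure_expMeasure one_pos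
  have hmul : Measurable fun p : ℝ × ℝ => p.1 * p.2 := measurable_fst.mul measurable_snd
  have hpair : P.map (fun ω => (E ω, F ω)) = (expMeasure 1).prod (expMeasure 1) := by
    refine ((ProbabilityTheory.indepFun_iff_map_prod_eq_prod_map_map
      hE.aemeasurable hF.aemeasurable).1 hindep).trans ?_
    rw [hlawE, hlawF]
  have hstep1 : P.map (fun ω => E ω * F ω)
      = ((expMeasure 1).prod (expMeasure 1)).map (fun p : ℝ × ℝ => p.1 * p.2) := by
    rw [← hpair, Measure.map_map hmul (hE.prodMk hF)]
    rfl
  rw [hstep1]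
  ext s hs
  rw [Measure.map_apply hmul hs, withDensity_apply _ hs]
  set I : ℝ → ℝ≥0∞ := s.indicator 1 with hIdef
  have hI : Measurable I := measurable_one.indicator hs
  set D : ℝ → ℝ≥0∞ := fun t => ENNReal.ofReal (2 * besselK0 (2 * Real.sqrt t)) with hDdef
  -- LHS as iterated integral
  have h0 : ((expMeasure 1).prod (expMeasure 1)) ((fun p : ℝ × ℝ => p.1 * p.2) ⁻¹' s)
      = ∫⁻ p : ℝ × ℝ, I (p.1 * p.2) ∂((expMeasure 1).prod (expMeasure 1)) := by
    rw [← lintegral_indicator_one (hmul hs)]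
    apply lintegral_congr
    intro p
    exact Set.indicator_comp_right (s := s)
      (fun p : ℝ × ℝ => p.1 * p.2) (g := (1 : ℝ → ℝ≥0∞)) (x := p)
  have h1 : ∫⁻ p : ℝ × ℝ, I (p.1 * p.2) ∂((expMeasure 1).prod (expMeasure 1))
      = ∫⁻ x, ∫⁻ y, I (x * y) ∂(expMeasure 1) ∂(expMeasure 1) :=
    lintegral_prod _ ((hI.comp hmul).aemeasurable)
  have houter : Measurable fun x => ∫⁻ y, I (x * y) ∂(expMeasure 1) :=
    Measurable.lintegral_prod_right (hI.comp hmul)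
  rw [h0, h1, lintegral_expMeasure _ houter]
  have h2 : ∀ x ∈ Set.Ioi (0:ℝ),
      ENNReal.ofReal (Real.exp (-x)) * ∫⁻ y, I (x * y) ∂(expMeasure 1)
      = ∫⁻ t in Set.Ioi (0:ℝ),
          ENNReal.ofReal (Real.exp (-x) * (x⁻¹ * Real.exp (-(t / x)))) * I t := by
    intro x hx
    rw [lintegral_expMeasure (fun y => I (x * y)) (hI.comp (measurable_const_mul x)),
      inner_cov hx I,
      ← lintegral_const_mul' _ _ ENNReal.ofReal_ne_top]
    apply lintegral_congr
    intro t
    rw [← mul_assoc, ← ENNReal.ofReal_mul (Real.exp_pos _).le]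
  rw [setLIntegral_congr_fun measurableSet_Ioi h2]
  -- swap the order of integration
  have hfmeas : Measurable fun p : ℝ × ℝ =>
      ENNReal.ofReal (Real.exp (-p.1) * (p.1⁻¹ * Real.exp (-(p.2 / p.1)))) * I p.2 := by
    apply Measurable.mul _ (hI.comp measurable_snd)
    apply Measurable.ennreal_ofReal
    exact ((Real.measurable_exp.comp measurable_fst.neg).mul
      (measurable_fst.inv.mul (Real.measurable_exp.comp (measurable_snd.div measurable_fst).neg)))
  rw [lintegral_lintegral_swap hfmeas.aemeasurable]
  have h3 : ∀ t ∈ Set.Ioi (0:ℝ),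
      (∫⁻ x in Set.Ioi (0:ℝ),
        ENNReal.ofReal (Real.exp (-x) * (x⁻¹ * Real.exp (-(t / x)))) * I t)
      = D t * I t := by
    intro t ht
    have hIne : I t ≠ ⊤ := by
      rw [hIdef]
      exact ne_top_of_le_ne_top ENNReal.one_ne_top (Set.indicator_le_self' (by simp) t)
    rw [lintegral_mul_const' _ _ hIne]
    congr 1
    simp only [hDdef]
    rw [← key_integral ht]
    apply lintegral_congr
    intro x
    congr 1
    ring
  rw [setLIntegral_congr_fun measurableSet_Ioi h3]
  -- identify with the density integral
  have hL : ∀ t : ℝ, D t * I t = s.indicator D t := by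
    intro t
    rw [hIdef]
    by_cases hts : t ∈ s <;> simp [Set.indicator_apply, hts]
  have hR : ∀ t : ℝ, (if 0 < t then D t else 0) = (Set.Ioi (0:ℝ)).indicator D t := by
    intro t
    simp [Set.indicator_apply, Set.mem_Ioi]
  calc ∫⁻ t in Set.Ioi (0:ℝ), D t * I t
      = ∫⁻ t in Set.Ioi (0:ℝ), s.indicator D t := by
        exact lintegral_congr fun t => hL t
    _ = ∫⁻ t, (Set.Ioi (0:ℝ)).indicator (s.indicator D) t := by
        rw [lintegral_indicator measurableSet_Ioi]
    _ = ∫⁻ t, s.indicator ((Set.Ioi (0:ℝ)).indicator D) t := by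
        apply lintegral_congr
        intro t
        rw [Set.indicator_indicator, Set.indicator_indicator, Set.inter_comm]
    _ = ∫⁻ t in s, (Set.Ioi (0:ℝ)).indicator D t := lintegral_indicator hs _
    _ = ∫⁻ t in s, (if 0 < t then D t else 0) := lintegral_congr fun t => (hR t).symm
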